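/- Let p be a prime, D ≥ 1, and f_{2D} as above. For x ∈ ℤ_p with v_p(x-1) = l ≥ 1: if 1 ≤ l < D then |f_{2D}(x)|_p = p^{-2l}, and if l ≥ D then |f_{2D}(x)|_p = p^{-(2D-1)}. -/

import Mathlib

private lemma norm_eq_of_sub_lt {p : ℕ} [Fact p.Prime] {a b : ℤ_[p]}
    (h : ‖a - b‖ < ‖b‖) : ‖a‖ = ‖b‖ := by
  have h2 : ‖a - b + b‖ = max ‖a - b‖ ‖b‖ :=
    PadicInt.norm_add_eq_max_of_ne (ne_of_lt h)
  rw [sub_add_cancel] at h2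
  rw [h2, max_eq_right h.le]

theorem stmt_5 (p : ℕ) [Fact p.Prime] (D : ℕ) (hD : 1 ≤ D) (x : ℤ_[p]) (l : ℕ) (hl : 1 ≤ l)
    (hval : ‖x - 1‖ = (p : ℝ) ^ (-(l : ℤ))) :
    (l < D →
      ‖(x - 1) ^ 2 * (∑ i ∈ Finset.range (2 * D - 1), (p : ℤ_[p]) ^ i * x ^ i)
          + (p : ℤ_[p]) ^ (2 * D - 1) * x ^ (2 * D - 1) * (1 + ((p : ℤ_[p]) - 2) * x)‖
        = (p : ℝ) ^ (-(2 * l : ℤ))) ∧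
    (D ≤ l →
      ‖(x - 1) ^ 2 * (∑ i ∈ Finset.range (2 * D - 1), (p : ℤ_[p]) ^ i * x ^ i)
          + (p : ℤ_[p]) ^ (2 * D - 1) * x ^ (2 * D - 1) * (1 + ((p : ℤ_[p]) - 2) * x)‖
        = (p : ℝ) ^ (-(2 * D - 1 : ℤ))) := by
  have hp : (1 : ℝ) < p := by exact_mod_cast (Fact.out : p.Prime).one_lt
  have hp0 : (0 : ℝ) < p := lt_trans one_pos hp
  have hzlt : ∀ m n : ℤ, m < n → (p : ℝ) ^ m < (p : ℝ) ^ n :=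
    fun m n h => zpow_lt_zpow_right₀ hp h
  have hx1 : ‖x - 1‖ < 1 := by
    rw [hval]
    have := hzlt (-(l : ℤ)) 0 (by omega)
    simpa using this
  have hx : ‖x‖ = 1 := by
    have : ‖x - 1‖ < ‖(1 : ℤ_[p])‖ := by simpa using hx1
    simpa using norm_eq_of_sub_lt this
  -- norm of p is < 1
  have hpn : ‖(p : ℤ_[p])‖ < 1 := by
    rw [PadicInt.norm_p]
    rw [inv_lt_one_iff₀]; right; exact hp
  -- norm of the sum is 1
  have hS : ‖∑ i ∈ Finset.range (2 * D - 1), (p : ℤ_[p]) ^ i * x ^ i‖ = 1 := by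
    have hlt1 : ‖(∑ i ∈ Finset.range (2 * D - 1), (p : ℤ_[p]) ^ i * x ^ i) - 1‖
        < ‖(1 : ℤ_[p])‖ := by
      rw [norm_one]
      have hn : 2 * D - 1 = (2 * D - 2) + 1 := by omega
      rw [hn, Finset.sum_range_succ']
      simp only [pow_zero, one_mul]
      rw [add_sub_cancel_right]
      have hfac : ∑ i ∈ Finset.range (2 * D - 2), (p : ℤ_[p]) ^ (i + 1) * x ^ (i + 1)
          = (p : ℤ_[p]) * ∑ i ∈ Finset.range (2 * D - 2), (p : ℤ_[p]) ^ i * x ^ (i + 1) := by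
        rw [Finset.mul_sum]
        congr 1; ext i; ring
      rw [hfac, norm_mul]
      calc ‖(p : ℤ_[p])‖ * ‖∑ i ∈ Finset.range (2 * D - 2), (p : ℤ_[p]) ^ i * x ^ (i + 1)‖
          ≤ ‖(p : ℤ_[p])‖ * 1 := by
            apply mul_le_mul_of_nonneg_left (PadicInt.norm_le_one _) (norm_nonneg _)
        _ < 1 := by rwa [mul_one]
    simpa using norm_eq_of_sub_lt hlt1
  -- norm of 1 + (p-2) x is 1
  have hU : ‖1 + ((p : ℤ_[p]) - 2) * x‖ = 1 := by
    have key : ‖(1 + ((p : ℤ_[p]) - 2) * x) - (-1)‖ < ‖(-1 : ℤ_[p])‖ := by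
      have heq : (1 + ((p : ℤ_[p]) - 2) * x) - (-1)
          = (p : ℤ_[p]) * x + (-2) * (x - 1) := by ring
      rw [heq]
      have h1 : ‖(p : ℤ_[p]) * x‖ < 1 := by
        rw [norm_mul, hx, mul_one]; exact hpn
      have h2 : ‖(-2 : ℤ_[p]) * (x - 1)‖ < 1 := by
        calc ‖(-2 : ℤ_[p]) * (x - 1)‖ ≤ 1 * ‖x - 1‖ := by
              rw [norm_mul]
              exact mul_le_mul_of_nonneg_right (PadicInt.norm_le_one _) (norm_nonneg _)
          _ < 1 := by rwa [one_mul]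
      have := PadicInt.nonarchimedean ((p : ℤ_[p]) * x) ((-2) * (x - 1))
      simp only [norm_neg, norm_one]
      exact lt_of_le_of_lt this (max_lt h1 h2)
    have := norm_eq_of_sub_lt key
    simpa using this
  -- norm of A
  have hA : ‖(x - 1) ^ 2 * (∑ i ∈ Finset.range (2 * D - 1), (p : ℤ_[p]) ^ i * x ^ i)‖
      = (p : ℝ) ^ (-(2 * l : ℤ)) := by
    rw [norm_mul, norm_pow, hS, mul_one, hval, ← zpow_natCast, ← zpow_mul]
    congr 1; push_cast; ring
  -- norm of B
  have hB : ‖(p : ℤ_[p]) ^ (2 * D - 1) * x ^ (2 * D - 1) * (1 + ((p : ℤ_[p]) - 2) * x)‖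
      = (p : ℝ) ^ (-(2 * D - 1 : ℤ)) := by
    rw [norm_mul, norm_mul, PadicInt.norm_p_pow,
      norm_pow, hx, one_pow, mul_one, hU, mul_one]
    congr 1; omega
  constructor
  · intro hlD
    have hlt : (p : ℝ) ^ (-(2 * D - 1 : ℤ)) < (p : ℝ) ^ (-(2 * l : ℤ)) :=
      hzlt _ _ (by omega)
    rw [PadicInt.norm_add_eq_max_of_ne (by rw [hA, hB]; exact (ne_of_lt hlt).symm),
      hA, hB, max_eq_left hlt.le]
  · intro hDl
    have hlt : (p : ℝ) ^ (-(2 * l : ℤ)) < (p : ℝ) ^ (-(2 * D - 1 : ℤ)) :=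
      hzlt _ _ (by omega)
    rw [PadicInt.norm_add_eq_max_of_ne (by rw [hA, hB]; exact ne_of_lt hlt),
      hA, hB, max_eq_right hlt.le]
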